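/- Cut-off values from an FSC under-approximate the optimal belief value: let F be an FSC for a POMDP M with nodes N, let p_{s,n} be the probability of reaching the target set T from state (s,n) in the induced MC M^F, and for a belief b define V(b,n) = Σ_{s ∈ S_{O(b)}} b(s)·p_{s,n} and V̲(b) = max_{n ∈ N} V(b,n). Then V̲(b) ≤ P_max^{M^B}(b ⊨ ◇T^B), the maximal probability of reaching target beliefs from b in the belief MDP. -/

import Mathlib

open scoped ENNReal Classical

/-- Probability `P(b,α,z')` of observing `z'` after taking action `a` in belief `b`. -/
noncomputable def obsProb {S A Z : Type*} (P : S → A → S → ℝ≥0∞) (O : S → Z)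
    (b : S → ℝ≥0∞) (a : A) (z' : Z) : ℝ≥0∞ :=
  ∑' s, b s * ∑' s', (if O s' = z' then P s a s' else 0)

/-- Bayesian belief update `⟦b,α,z'⟧`. -/
noncomputable def beliefUpdate {S A Z : Type*} (P : S → A → S → ℝ≥0∞) (O : S → Z)
    (b : S → ℝ≥0∞) (a : A) (z' : Z) : S → ℝ≥0∞ :=
  fun s' => if O s' = z' then (∑' s, b s * P s a s') / obsProb P O b a z' else 0

/-- A belief is a target belief iff it is supported on states with the target observation. -/
def targetBelief {S Z : Type*} (O : S → Z) (zT : Z) (b : S → ℝ≥0∞) : Prop :=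
  ∀ s, b s ≠ 0 → O s = zT

/-- `n`-step maximal reachability of target beliefs in the belief MDP (value iteration). -/
noncomputable def beliefMaxReachN {S A Z : Type*} [Fintype Z]
    (P : S → A → S → ℝ≥0∞) (O : S → Z) (zT : Z) : ℕ → (S → ℝ≥0∞) → ℝ≥0∞
  | 0, b => if targetBelief O zT b then 1 else 0
  | n + 1, b => if targetBelief O zT b then 1 else
      ⨆ a, ∑ z' : Z, obsProb P O b a z' *
        beliefMaxReachN P O zT n (beliefUpdate P O b a z')

/-- Maximal reachability probability of target beliefs in the belief MDP. -/
noncomputable def beliefMaxReach {S A Z : Type*} [Fintype Z]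
    (P : S → A → S → ℝ≥0∞) (O : S → Z) (zT : Z) (b : S → ℝ≥0∞) : ℝ≥0∞ :=
  ⨆ n, beliefMaxReachN P O zT n b

/-- `n`-step reachability probability of `T` in a Markov chain. -/
noncomputable def mcReachN {St : Type*} (Q : St → St → ℝ≥0∞) (T : Set St) :
    ℕ → St → ℝ≥0∞
  | 0, s => if s ∈ T then 1 else 0
  | n + 1, s => if s ∈ T then 1 else ∑' s', Q s s' * mcReachN Q T n s'

/-- Reachability probability of `T` in a Markov chain. -/
noncomputable def mcReach {St : Type*} (Q : St → St → ℝ≥0∞) (T : Set St) (s : St) : ℝ≥0∞ :=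
  ⨆ n, mcReachN Q T n s

/-- Transition matrix of the MC induced on a POMDP by an FSC `(γ, δ)`. -/
noncomputable def inducedQ {S A Z N : Type*} (P : S → A → S → ℝ≥0∞) (O : S → Z)
    (γ : N → Z → A) (δ : N → Z → Z → N) : (S × N) → (S × N) → ℝ≥0∞ :=
  fun p q =>
    (if q.2 = δ p.2 (O p.1) (O q.1) then (1 : ℝ≥0∞) else 0) * P p.1 (γ p.2 (O p.1)) q.1


private lemma tsum_iSup_mono' {α : Type*} {f : ℕ → α → ℝ≥0∞} (hf : Monotone f) :
    ∑' a, ⨆ k, f k a = ⨆ k, ∑' a, f k a := by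
  refine le_antisymm ?_ (iSup_le fun k => ENNReal.tsum_le_tsum fun a => le_iSup (fun k => f k a) k)
  rw [ENNReal.tsum_eq_iSup_sum]
  refine iSup_le fun F => ?_
  rw [ENNReal.finsetSum_iSup_of_monotone (fun a i j h => hf h a)]
  exact iSup_mono fun k => ENNReal.sum_le_tsum F

private lemma mcReachN_succ_le {St : Type*} (Q : St → St → ℝ≥0∞) (T : Set St) :
    ∀ k p, mcReachN Q T k p ≤ mcReachN Q T (k + 1) p := by
  intro k
  induction k with
  | zero =>
    intro p
    show (if p ∈ T then (1:ℝ≥0∞) else 0) ≤ if p ∈ T then 1 else ∑' q, Q p q * mcReachN Q T 0 q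
    split_ifs <;> simp
  | succ k ih =>
    intro p
    show (if p ∈ T then (1:ℝ≥0∞) else ∑' q, Q p q * mcReachN Q T k q)
        ≤ if p ∈ T then 1 else ∑' q, Q p q * mcReachN Q T (k+1) q
    split_ifs
    · exact le_rfl
    · exact ENNReal.tsum_le_tsum fun q => mul_le_mul_right (ih q) _

private lemma mcReachN_mono {St : Type*} (Q : St → St → ℝ≥0∞) (T : Set St) (p : St) :
    Monotone (fun k => mcReachN Q T k p) :=
  monotone_nat_of_le_succ fun k => mcReachN_succ_le Q T k p

private lemma mcReachN_le_one {St : Type*} {Q : St → St → ℝ≥0∞} (T : Set St)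
    (hQ : ∀ p, ∑' q, Q p q ≤ 1) : ∀ k p, mcReachN Q T k p ≤ 1 := by
  intro k
  induction k with
  | zero => intro p; show (if p ∈ T then (1:ℝ≥0∞) else 0) ≤ 1; split_ifs <;> simp
  | succ k ih =>
    intro p
    show (if p ∈ T then (1:ℝ≥0∞) else ∑' q, Q p q * mcReachN Q T k q) ≤ 1
    split_ifs
    · exact le_rfl
    · calc ∑' q, Q p q * mcReachN Q T k q ≤ ∑' q, Q p q * 1 :=
            ENNReal.tsum_le_tsum fun q => mul_le_mul_right (ih q) _
        _ ≤ 1 := by simpa using hQ p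

private lemma inducedQ_row {S A Z N : Type*} (P : S → A → S → ℝ≥0∞)
    (hP : ∀ s a, ∑' s', P s a s' = 1) (O : S → Z) (γ : N → Z → A) (δ : N → Z → Z → N)
    (p : S × N) : ∑' q, inducedQ P O γ δ p q = 1 := by
  calc (∑' q, inducedQ P O γ δ p q)
      = ∑' s', ∑' n', inducedQ P O γ δ p (s', n') :=
        ENNReal.tsum_prod (f := fun s' n' => inducedQ P O γ δ p (s', n'))
    _ = ∑' s', P p.1 (γ p.2 (O p.1)) s' := by
        refine tsum_congr fun s' => ?_
        rw [tsum_eq_single (δ p.2 (O p.1) (O s')) (fun n' hn' => by simp [inducedQ, hn'])]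
        simp [inducedQ]
    _ = 1 := hP _ _

private lemma obsProb_eq {S A Z : Type*} (P : S → A → S → ℝ≥0∞) (O : S → Z)
    (b : S → ℝ≥0∞) (a : A) (z' : Z) :
    obsProb P O b a z' = ∑' s', if O s' = z' then (∑' s, b s * P s a s') else 0 := by
  calc obsProb P O b a z'
      = ∑' s, ∑' s', b s * (if O s' = z' then P s a s' else 0) :=
        tsum_congr fun s => (ENNReal.tsum_mul_left).symm
    _ = ∑' s', ∑' s, b s * (if O s' = z' then P s a s' else 0) := ENNReal.tsum_comm
    _ = ∑' s', if O s' = z' then (∑' s, b s * P s a s') else 0 := by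
        refine tsum_congr fun s' => ?_
        by_cases h : O s' = z' <;> simp [h]

private lemma obsProb_le_one {S A Z : Type*} (P : S → A → S → ℝ≥0∞)
    (hP : ∀ s a, ∑' s', P s a s' = 1) (O : S → Z)
    (b : S → ℝ≥0∞) (hb : ∑' s, b s = 1) (a : A) (z' : Z) : obsProb P O b a z' ≤ 1 := by
  calc obsProb P O b a z'
      ≤ ∑' s, b s * 1 := ENNReal.tsum_le_tsum fun s => mul_le_mul_right
        (by rw [← hP s a]; exact ENNReal.tsum_le_tsum fun s' => by split_ifs <;> simp) _
    _ = 1 := by simpa using hb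

private lemma key_step {S A Z N : Type*} [Fintype Z]
    (P : S → A → S → ℝ≥0∞) (hP : ∀ s a, ∑' s', P s a s' = 1)
    (O : S → Z) (T : Set S) (zT : Z)
    (hT : ∀ s, s ∈ T ↔ O s = zT)
    (γ : N → Z → A) (δ : N → Z → Z → N) :
    ∀ (k : ℕ) (n : N) (b : S → ℝ≥0∞) (z : Z),
      (∀ s, b s ≠ 0 → O s = z) → (∑' s, b s = 1) →
      ∑' s, b s * mcReachN (inducedQ P O γ δ) {p : S × N | p.1 ∈ T} k (s, n)
        ≤ beliefMaxReachN (A := A) P O zT k b := by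
  set Q := inducedQ P O γ δ with hQdef
  set TT : Set (S × N) := {p : S × N | p.1 ∈ T} with hTTdef
  have hQrow : ∀ p, ∑' q, Q p q ≤ 1 := fun p => le_of_eq (inducedQ_row P hP O γ δ p)
  intro k
  induction k with
  | zero =>
    intro n b z hbsupp hb
    by_cases htb : targetBelief O zT b
    · rw [show beliefMaxReachN (A := A) P O zT 0 b = 1 by simp [beliefMaxReachN, htb]]
      calc (∑' s, b s * mcReachN Q TT 0 (s, n))
          ≤ ∑' s, b s * 1 := ENNReal.tsum_le_tsum fun s =>
            mul_le_mul_right (mcReachN_le_one TT hQrow 0 (s, n)) _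
        _ = 1 := by simpa using hb
    · have hz : z ≠ zT := by
        unfold targetBelief at htb
        push_neg at htb
        obtain ⟨s0, hs0, hs0T⟩ := htb
        exact fun h => hs0T ((hbsupp s0 hs0).trans h)
      rw [show beliefMaxReachN (A := A) P O zT 0 b = 0 by simp [beliefMaxReachN, htb]]
      refine le_of_eq (ENNReal.tsum_eq_zero.mpr fun s => ?_)
      by_cases hbs : b s = 0
      · simp [hbs]
      · have hsT : s ∉ T := fun h => hz ((hbsupp s hbs).symm.trans ((hT s).mp h))
        show b s * mcReachN Q TT 0 (s, n) = 0
        have : (s, n) ∉ TT := hsT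
        simp [mcReachN, this]
  | succ k ih =>
    intro n b z hbsupp hb
    by_cases htb : targetBelief O zT b
    · rw [show beliefMaxReachN (A := A) P O zT (k+1) b = 1 by simp [beliefMaxReachN, htb]]
      calc (∑' s, b s * mcReachN Q TT (k+1) (s, n))
          ≤ ∑' s, b s * 1 := ENNReal.tsum_le_tsum fun s =>
            mul_le_mul_right (mcReachN_le_one TT hQrow (k+1) (s, n)) _
        _ = 1 := by simpa using hb
    · have hz : z ≠ zT := by
        unfold targetBelief at htb
        push_neg at htb
        obtain ⟨s0, hs0, hs0T⟩ := htb
        exact fun h => hs0T ((hbsupp s0 hs0).trans h)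
      set a := γ n z with ha
      set pk : S × N → ℝ≥0∞ := fun q => mcReachN Q TT k q with hpk
      set num : S → ℝ≥0∞ := fun s' => ∑' s, b s * P s a s' with hnum
      -- Step 1: rewrite the LHS
      have step1 : (∑' s, b s * mcReachN Q TT (k+1) (s, n))
          = ∑' s, ∑' s', b s * (P s a s' * pk (s', δ n z (O s'))) := by
        refine tsum_congr fun s => ?_
        by_cases hbs : b s = 0
        · simp [hbs]
        · have hOs : O s = z := hbsupp s hbs
          have hsT : s ∉ T := fun h => hz (hOs.symm.trans ((hT s).mp h))
          have hnotTT : (s, n) ∉ TT := hsT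
          rw [ENNReal.tsum_mul_left]
          congr 1
          show mcReachN Q TT (k+1) (s, n) = ∑' s', P s a s' * pk (s', δ n z (O s'))
          have h1 : mcReachN Q TT (k+1) (s, n) = ∑' q, Q (s, n) q * pk q := by
            simp [mcReachN, hnotTT, hpk]
          have h2 : (∑' q : S × N, Q (s, n) q * pk q)
              = ∑' s', ∑' n', Q (s, n) (s', n') * pk (s', n') :=
            ENNReal.tsum_prod (f := fun s' n' => Q (s, n) (s', n') * pk (s', n'))
          rw [h1, h2]
          refine tsum_congr fun s' => ?_
          rw [tsum_eq_single (δ n z (O s')) (fun n' hn' => by simp [hQdef, inducedQ, hOs, hn'])]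
          simp [hQdef, inducedQ, hOs, ha]
      have step2 : (∑' s, ∑' s', b s * (P s a s' * pk (s', δ n z (O s'))))
          = ∑' s', num s' * pk (s', δ n z (O s')) := by
        rw [ENNReal.tsum_comm]
        refine tsum_congr fun s' => ?_
        simp_rw [← mul_assoc]
        exact ENNReal.tsum_mul_right
      have step3 : (∑' s', num s' * pk (s', δ n z (O s')))
          = ∑ z' : Z, ∑' s', if O s' = z' then num s' * pk (s', δ n z z') else 0 := by
        calc (∑' s', num s' * pk (s', δ n z (O s')))
            = ∑' s', ∑ z' : Z, (if O s' = z' then num s' * pk (s', δ n z z') else 0) := by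
              refine tsum_congr fun s' => ?_
              rw [Finset.sum_ite_eq Finset.univ (O s')
                (fun z' => num s' * pk (s', δ n z z'))]
              simp
          _ = ∑ z' : Z, ∑' s', (if O s' = z' then num s' * pk (s', δ n z z') else 0) :=
              Summable.tsum_finsetSum fun _ _ => ENNReal.summable
      -- Step 4: bound each z' term
      have step4 : ∀ z' : Z,
          (∑' s', if O s' = z' then num s' * pk (s', δ n z z') else 0)
            ≤ obsProb P O b a z' * beliefMaxReachN (A := A) P O zT k (beliefUpdate P O b a z') := by
        intro z'
        by_cases hc0 : obsProb P O b a z' = 0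
        · have hnum0 : ∀ s', O s' = z' → num s' = 0 := by
            intro s' hOs'
            have h := ENNReal.tsum_eq_zero.mp ((obsProb_eq P O b a z').symm.trans hc0) s'
            rw [if_pos hOs'] at h
            exact h
          refine le_trans (le_of_eq (ENNReal.tsum_eq_zero.mpr fun s' => ?_)) zero_le
          by_cases h : O s' = z' <;> simp [h, hnum0 _]
        · have hc1 : obsProb P O b a z' ≤ 1 := obsProb_le_one P hP O b hb a z'
          have hcfin : obsProb P O b a z' ≠ ⊤ := ne_top_of_le_ne_top ENNReal.one_ne_top hc1
          set c := obsProb P O b a z' with hc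
          set b' := beliefUpdate P O b a z' with hb'def
          have hsupp' : ∀ s', b' s' ≠ 0 → O s' = z' := by
            intro s' h
            by_contra hcon
            simp [hb'def, beliefUpdate, hcon] at h
          have hb'sum : ∑' s', b' s' = 1 := by
            have e1 : ∀ s', b' s' = (if O s' = z' then (∑' s, b s * P s a s') else 0) * c⁻¹ := by
              intro s'
              by_cases h : O s' = z' <;>
                simp [hb'def, beliefUpdate, h, hc, div_eq_mul_inv]
            simp_rw [e1]
            rw [ENNReal.tsum_mul_right, ← obsProb_eq, ← hc, ← div_eq_mul_inv,
              ENNReal.div_self hc0 hcfin]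
          have hih := ih (δ n z z') b' z' hsupp' hb'sum
          calc (∑' s', if O s' = z' then num s' * pk (s', δ n z z') else 0)
              = c * ∑' s', b' s' * pk (s', δ n z z') := by
                rw [← ENNReal.tsum_mul_left]
                refine tsum_congr fun s' => ?_
                by_cases h : O s' = z'
                · have hbv : b' s' = num s' / c := by
                    simp [hb'def, beliefUpdate, h, hnum, hc]
                  rw [if_pos h, hbv, ← mul_assoc, ENNReal.mul_div_cancel hc0 hcfin]
                · have hbv : b' s' = 0 := by simp [hb'def, beliefUpdate, h]
                  simp [h, hbv]
            _ ≤ c * beliefMaxReachN (A := A) P O zT k b' := mul_le_mul_right hih _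
      rw [show beliefMaxReachN (A := A) P O zT (k+1) b
          = ⨆ a', ∑ z' : Z, obsProb P O b a' z' *
              beliefMaxReachN (A := A) P O zT k (beliefUpdate P O b a' z') by
        simp [beliefMaxReachN, htb]]
      refine le_trans ?_ (le_iSup _ a)
      rw [step1, step2, step3]
      exact Finset.sum_le_sum fun z' _ => step4 z'

/-- cut-off values from an FSC under-approximate the optimal belief value:
with `p_{s,n}` the reachability probabilities of `T × N` in the induced MC `M^F`,
`V(b,n) = Σ_s b(s)·p_{s,n}` and `V̲(b) = max_n V(b,n)`, we have
`V̲(b) ≤ P_max^{M^B}(b ⊨ ◇T^B)`. -/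
theorem cutoff_underapproximates_belief_value
    {S A Z N : Type*} [Fintype Z]
    (P : S → A → S → ℝ≥0∞) (hP : ∀ s a, ∑' s', P s a s' = 1)
    (O : S → Z) (T : Set S) (zT : Z)
    (hT : ∀ s, s ∈ T ↔ O s = zT)
    (habs : ∀ s ∈ T, ∀ a s', P s a s' = if s' = s then 1 else 0)
    (γ : N → Z → A) (δ : N → Z → Z → N)
    (b : S → ℝ≥0∞) (z : Z)
    (hbsupp : ∀ s, b s ≠ 0 → O s = z) (hb : ∑' s, b s = 1) :
    (⨆ n : N, ∑' s, b s * mcReach (inducedQ P O γ δ) {p : S × N | p.1 ∈ T} (s, n))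
      ≤ beliefMaxReach (A := A) P O zT b :=  by
  have hQrow : ∀ p, ∑' q, inducedQ P O γ δ p q ≤ 1 :=
    fun p => le_of_eq (inducedQ_row P hP O γ δ p)
  refine iSup_le fun n => ?_
  have hmono : Monotone (fun k => fun s =>
      b s * mcReachN (inducedQ P O γ δ) {p : S × N | p.1 ∈ T} k (s, n)) :=
    fun k k' hkk' s => mul_le_mul_right (mcReachN_mono _ _ _ hkk') _
  calc (∑' s, b s * mcReach (inducedQ P O γ δ) {p : S × N | p.1 ∈ T} (s, n))
      = ∑' s, ⨆ k, b s * mcReachN (inducedQ P O γ δ) {p : S × N | p.1 ∈ T} k (s, n) := by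
        refine tsum_congr fun s => ?_
        rw [mcReach, ENNReal.mul_iSup]
    _ = ⨆ k, ∑' s, b s * mcReachN (inducedQ P O γ δ) {p : S × N | p.1 ∈ T} k (s, n) :=
        tsum_iSup_mono' hmono
    _ ≤ ⨆ k, beliefMaxReachN (A := A) P O zT k b :=
        iSup_mono fun k => key_step P hP O T zT hT γ δ k n b z hbsupp hb
    _ = beliefMaxReach (A := A) P O zT b := rfl
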